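/- For every m ≥ 2, the topological dimension of Q_m satisfies D(m) − D(m−1) − 1 ≤ dim Q_m ≤ D(m) − 1, where D(m) = 2k(2k−1)^{m−1} is the number of freely reduced words of length m. -/

import Mathlib

open Finset
noncomputable section
attribute [local instance] Classical.propDecidable

abbrev Letter (k : ℕ) := Fin k × Bool

def linv {k : ℕ} (x : Letter k) : Letter k := (x.1, !x.2)

/-- `w` is a freely reduced word: no letter is followed by its inverse. -/
def Reduced {k : ℕ} (w : List (Letter k)) : Prop :=
  ∀ i < w.length, w[i + 1]? ≠ (w[i]?).map linv

/-- `w` is cyclically reduced. -/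
def CyclRed {k : ℕ} (w : List (Letter k)) : Prop := Reduced (w ++ w)

/-- `w` and `w'` define the same cyclic word. -/
def CyclEq {k : ℕ} (w w' : List (Letter k)) : Prop := ∃ n, w' = w.rotate n

/-- the word `u` occurs in the cyclic word of `w` starting at position `i` (with wrap-around). -/
def occursAt {k : ℕ} (w u : List (Letter k)) (i : ℕ) : Prop :=
  ∀ j < u.length, w[(i + j) % w.length]? = u[j]?

/-- the number `n_w(u)` of cyclic occurrences of `u` in the cyclic word `w`. -/
def cyclCount {k : ℕ} (w u : List (Letter k)) : ℕ :=
  ((Finset.range w.length).filter (occursAt w u)).card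

/-- the frequency `f_w(u) = n_w(u)/‖w‖`. -/
def freq {k : ℕ} (w u : List (Letter k)) : ℚ := (cyclCount w u : ℚ) / (w.length : ℚ)

/-- the finite set of freely reduced words of length `m`. -/
def WordsM (k m : ℕ) : Finset (List (Letter k)) :=
  ((Finset.univ : Finset (Fin m → Letter k)).image fun f => List.ofFn f).filter
    (fun w => Reduced w)

/-- the polyhedron `Q_m`, realized as functions supported on reduced words of length `m`. -/
def Qset (k m : ℕ) : Set (List (Letter k) → ℝ) :=
  {q | (∀ v, ¬(Reduced v ∧ v.length = m) → q v = 0) ∧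
       (∀ v, 0 ≤ q v) ∧
       (∑ v ∈ WordsM k m, q v = 1) ∧
       ∀ u : List (Letter k), Reduced u → u.length = m - 1 →
         (∑ x ∈ Finset.univ.filter (fun x : Letter k => Reduced (u ++ [x])), q (u ++ [x])) =
         (∑ x ∈ Finset.univ.filter (fun x : Letter k => Reduced (x :: u)), q (x :: u)) }

/-- `D(m) = 2k(2k-1)^{m-1}`, the number of freely reduced words of length `m`. -/
def DD (k m : ℕ) : ℕ := 2 * k * (2 * k - 1) ^ (m - 1)

lemma linv_linv {k : ℕ} (x : Letter k) : linv (linv x) = x := by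
  simp [linv]

lemma reduced_iff_chain' {k : ℕ} (w : List (Letter k)) :
    Reduced w ↔ w.IsChain (fun a b => b ≠ linv a) := by
  rw [List.isChain_iff_getElem]
  constructor
  · intro h i hi
    have h1 : i < w.length := by omega
    have h2 : i + 1 < w.length := by omega
    have := h i h1
    simp only [List.getElem?_eq_getElem h1, List.getElem?_eq_getElem h2, Option.map_some] at this
    simpa [List.get_eq_getElem] using fun e => this (by rw [e])
  · intro h i hi
    by_cases h2 : i + 1 < w.length
    · have := h i (by omega)
      simp only [List.getElem?_eq_getElem hi, List.getElem?_eq_getElem h2, Option.map_some]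
      exact fun e => this (by injection e)
    · have : w[i+1]? = none := by
        rw [List.getElem?_eq_none]; omega
      rw [this, List.getElem?_eq_getElem hi]
      simp

lemma mem_wordsM {k m : ℕ} {w : List (Letter k)} :
    w ∈ WordsM k m ↔ Reduced w ∧ w.length = m := by
  unfold WordsM
  simp only [Finset.mem_filter, Finset.mem_image, Finset.mem_univ, true_and]
  constructor
  · rintro ⟨⟨f, rfl⟩, hr⟩
    exact ⟨hr, by simp⟩
  · rintro ⟨hr, hl⟩
    refine ⟨⟨fun i => w.get ⟨i, by omega⟩, ?_⟩, hr⟩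
    apply List.ext_getElem <;> simp [hl]

lemma reduced_append_singleton {k : ℕ} {u : List (Letter k)} (hu : u ≠ []) (x : Letter k) :
    Reduced (u ++ [x]) ↔ Reduced u ∧ x ≠ linv (u.getLast hu) := by
  simp only [reduced_iff_chain', List.isChain_append, List.isChain_singleton, true_and,
    List.head?_cons, List.getLast?_eq_getLast hu, Option.mem_def, Option.some.injEq]
  constructor
  · rintro ⟨h1, h2⟩
    exact ⟨h1, h2 _ rfl _ rfl⟩
  · rintro ⟨h1, h2⟩
    exact ⟨h1, by rintro a rfl b rfl; exact h2⟩

lemma reduced_cons {k : ℕ} {u : List (Letter k)} (hu : u ≠ []) (x : Letter k) :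
    Reduced (x :: u) ↔ Reduced u ∧ x ≠ linv (u.head hu) := by
  simp only [reduced_iff_chain', List.isChain_cons, List.head?_eq_head hu, Option.mem_def,
    Option.some.injEq]
  constructor
  · rintro ⟨h1, h2⟩
    refine ⟨h2, fun e => h1 _ rfl (by rw [e, linv_linv])⟩
  · rintro ⟨h1, h2⟩
    refine ⟨fun y hy e => ?_, h1⟩
    exact h2 (by rw [hy, e, linv_linv])

lemma card_letter (k : ℕ) : Fintype.card (Letter k) = 2 * k := by
  simp [Fintype.card_prod, mul_comm]

lemma card_filter_ne {k : ℕ} (c : Letter k) :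
    ((Finset.univ : Finset (Letter k)).filter (fun x => x ≠ c)).card = 2 * k - 1 := by
  rw [Finset.filter_ne', Finset.card_erase_of_mem (Finset.mem_univ c)]
  simp [card_letter, mul_comm]

lemma card_right_ext {k : ℕ} {u : List (Letter k)} (hu : u ≠ []) (hr : Reduced u) :
    ((Finset.univ : Finset (Letter k)).filter (fun x => Reduced (u ++ [x]))).card = 2 * k - 1 := by
  have : ∀ x : Letter k, Reduced (u ++ [x]) ↔ x ≠ linv (u.getLast hu) := by
    intro x; rw [reduced_append_singleton hu]; tauto
  rw [show (Finset.univ.filter (fun x : Letter k => Reduced (u ++ [x]))) =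
    Finset.univ.filter (fun x => x ≠ linv (u.getLast hu)) from Finset.filter_congr
      (fun x _ => by simp [this x])]
  exact card_filter_ne _

lemma card_left_ext {k : ℕ} {u : List (Letter k)} (hu : u ≠ []) (hr : Reduced u) :
    ((Finset.univ : Finset (Letter k)).filter (fun x => Reduced (x :: u))).card = 2 * k - 1 := by
  have : ∀ x : Letter k, Reduced (x :: u) ↔ x ≠ linv (u.head hu) := by
    intro x; rw [reduced_cons hu]; tauto
  rw [show (Finset.univ.filter (fun x : Letter k => Reduced (x :: u))) =
    Finset.univ.filter (fun x => x ≠ linv (u.head hu)) from Finset.filter_congr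
      (fun x _ => by simp [this x])]
  exact card_filter_ne _

lemma reduced_of_append {k : ℕ} {u v : List (Letter k)} (h : Reduced (u ++ v)) : Reduced u := by
  rw [reduced_iff_chain'] at *
  exact (List.isChain_append.mp h).1

lemma wordsM_succ (k n : ℕ) (hn : 1 ≤ n) :
    WordsM k (n + 1) = (WordsM k n).biUnion (fun w =>
      (Finset.univ.filter (fun x => Reduced (w ++ [x]))).image (fun x => w ++ [x])) := by
  ext w'
  simp only [Finset.mem_biUnion, Finset.mem_image, Finset.mem_filter, Finset.mem_univ, true_and,
    mem_wordsM]
  constructor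
  · rintro ⟨hr, hl⟩
    have hne : w' ≠ [] := by
      intro e; rw [e] at hl; simp at hl
    have hsplit := List.dropLast_append_getLast hne
    refine ⟨w'.dropLast, ⟨?_, ?_⟩, w'.getLast hne, ?_, hsplit⟩
    · exact reduced_of_append (hsplit ▸ hr)
    · rw [List.length_dropLast, hl]; omega
    · rw [hsplit]; exact hr
  · rintro ⟨w, ⟨hr, hl⟩, x, hx, rfl⟩
    exact ⟨hx, by simp [hl]⟩

lemma card_wordsM (k : ℕ) : ∀ m, 1 ≤ m → (WordsM k m).card = 2 * k * (2 * k - 1) ^ (m - 1) := by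
  intro m
  induction m with
  | zero => omega
  | succ n ih =>
    intro _
    rcases Nat.eq_or_lt_of_le (Nat.one_le_iff_ne_zero.mpr (Nat.succ_ne_zero n) : 1 ≤ n + 1) with h1 | h1
    · -- n = 0
      have hn : n = 0 := by omega
      subst hn
      have : WordsM k 1 = (Finset.univ : Finset (Letter k)).image (fun x => [x]) := by
        ext w
        simp only [mem_wordsM, Finset.mem_image, Finset.mem_univ, true_and]
        constructor
        · rintro ⟨hr, hl⟩
          match w, hl with
          | [a], _ => exact ⟨a, rfl⟩
        · rintro ⟨x, rfl⟩
          refine ⟨?_, rfl⟩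
          rw [reduced_iff_chain']
          exact List.isChain_singleton _
      rw [this, Finset.card_image_of_injective _ (fun a b e => by injection e),
        Finset.card_univ, card_letter]
      simp
    · -- n ≥ 1
      have hn : 1 ≤ n := by omega
      rw [wordsM_succ k n hn, Finset.card_biUnion]
      · have : ∀ w ∈ WordsM k n,
            ((Finset.univ.filter (fun x => Reduced (w ++ [x]))).image (fun x => w ++ [x])).card
              = 2 * k - 1 := by
          intro w hw
          rw [mem_wordsM] at hw
          have hne : w ≠ [] := by intro e; rw [e] at hw; simp at hw; omega
          rw [Finset.card_image_of_injective _ (fun a b e => by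
            simpa using List.append_inj_right e rfl), card_right_ext hne hw.1]
        rw [Finset.sum_congr rfl this, Finset.sum_const, ih hn, smul_eq_mul]
        have : (2 * k - 1) ^ (n - 1) * (2 * k - 1) = (2 * k - 1) ^ n := by
          rw [← pow_succ]
          congr 1
          omega
        simp only [Nat.add_sub_cancel]
        rw [mul_assoc, this]
      · intro w₁ h₁ w₂ h₂ hne
        simp only [Finset.disjoint_left, Finset.mem_image, Finset.mem_filter, Finset.mem_univ,
          true_and]
        rintro a ⟨x, hx, rfl⟩ ⟨y, hy, he⟩
        exact hne (by simpa using (List.append_inj' he.symm (by simp)).1)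


def extZ (k m : ℕ) : ({x // x ∈ WordsM k m} → ℝ) →ₗ[ℝ] (List (Letter k) → ℝ) where
  toFun f := fun v => if h : v ∈ WordsM k m then f ⟨v, h⟩ else 0
  map_add' f g := by funext v; by_cases h : v ∈ WordsM k m <;> simp [h]
  map_smul' c f := by funext v; by_cases h : v ∈ WordsM k m <;> simp [h]

lemma extZ_injective (k m : ℕ) : Function.Injective (extZ k m) := by
  intro f g h
  funext w
  have := congrFun h w.1
  simpa [extZ, w.2] using this

lemma extZ_apply_mem (k m : ℕ) (f : {x // x ∈ WordsM k m} → ℝ) {v : List (Letter k)}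
    (hv : v ∈ WordsM k m) : extZ k m f v = f ⟨v, hv⟩ := by
  simp [extZ, hv]

lemma extZ_apply_not_mem (k m : ℕ) (f : {x // x ∈ WordsM k m} → ℝ) {v : List (Letter k)}
    (hv : v ∉ WordsM k m) : extZ k m f v = 0 := by
  simp [extZ, hv]

def sumF (k m : ℕ) : ({x // x ∈ WordsM k m} → ℝ) →ₗ[ℝ] ℝ where
  toFun f := ∑ w : {x // x ∈ WordsM k m}, f w
  map_add' f g := by simp [Finset.sum_add_distrib]
  map_smul' c f := by simp [Finset.mul_sum]

lemma sum_extZ (k m : ℕ) (f : {x // x ∈ WordsM k m} → ℝ) :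
    ∑ v ∈ WordsM k m, extZ k m f v = sumF k m f := by
  rw [show (sumF k m f) = ∑ w : {x // x ∈ WordsM k m}, f w from rfl,
    ← Finset.sum_coe_sort (WordsM k m) (extZ k m f)]
  exact Finset.sum_congr rfl fun w _ => by rw [extZ_apply_mem k m f w.2]

def flowMap (k m : ℕ) : (List (Letter k) → ℝ) →ₗ[ℝ] ({x // x ∈ WordsM k (m - 1)} → ℝ) where
  toFun q := fun u =>
    (∑ x ∈ Finset.univ.filter (fun x : Letter k => Reduced ((u : List (Letter k)) ++ [x])),
      q ((u : List (Letter k)) ++ [x])) -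
    (∑ x ∈ Finset.univ.filter (fun x : Letter k => Reduced (x :: (u : List (Letter k)))),
      q (x :: (u : List (Letter k))))
  map_add' f g := by
    funext u
    simp only [Pi.add_apply, Finset.sum_add_distrib]
    ring
  map_smul' c f := by
    funext u
    simp only [Pi.smul_apply, smul_eq_mul, RingHom.id_apply, Pi.smul_apply, ← Finset.mul_sum]
    ring

lemma mem_Qset {k m : ℕ} (hm : 2 ≤ m) (q : List (Letter k) → ℝ)
    (h0 : ∀ v, v ∉ WordsM k m → q v = 0) (hpos : ∀ v, 0 ≤ q v)
    (hsum : ∑ v ∈ WordsM k m, q v = 1)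
    (hflow : flowMap k m q = 0) : q ∈ Qset k m := by
  refine ⟨fun v hv => h0 v (by rw [mem_wordsM]; exact hv), hpos, hsum, fun u hr hl => ?_⟩
  have hu : u ∈ WordsM k (m - 1) := mem_wordsM.mpr ⟨hr, hl⟩
  have := congrFun hflow ⟨u, hu⟩
  simpa [flowMap, sub_eq_zero] using this

lemma DD_pos {k m : ℕ} (hk : 2 ≤ k) : 0 < DD k m := by
  unfold DD
  have h1 : 0 < 2 * k - 1 := by omega
  exact Nat.mul_pos (by omega) (pow_pos h1 _)

lemma flow_q0 {k m : ℕ} (hk : 2 ≤ k) (hm : 2 ≤ m) (c : ℝ) :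
    flowMap k m (extZ k m (fun _ => c)) = 0 := by
  funext u
  obtain ⟨hr, hl⟩ := mem_wordsM.mp u.2
  have hne : (u : List (Letter k)) ≠ [] := by
    intro e; rw [e] at hl; simp at hl; omega
  show (∑ x ∈ _, extZ k m (fun _ => c) ((u : List (Letter k)) ++ [x])) -
    (∑ x ∈ _, extZ k m (fun _ => c) (x :: (u : List (Letter k)))) = 0
  have h1 : ∀ x ∈ Finset.univ.filter (fun x : Letter k => Reduced ((u : List (Letter k)) ++ [x])),
      extZ k m (fun _ => c) ((u : List (Letter k)) ++ [x]) = c := by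
    intro x hx
    rw [Finset.mem_filter] at hx
    have : (u : List (Letter k)) ++ [x] ∈ WordsM k m :=
      mem_wordsM.mpr ⟨hx.2, by simp [hl]; omega⟩
    rw [extZ_apply_mem _ _ _ this]
  have h2 : ∀ x ∈ Finset.univ.filter (fun x : Letter k => Reduced (x :: (u : List (Letter k)))),
      extZ k m (fun _ => c) (x :: (u : List (Letter k))) = c := by
    intro x hx
    rw [Finset.mem_filter] at hx
    have : x :: (u : List (Letter k)) ∈ WordsM k m :=
      mem_wordsM.mpr ⟨hx.2, by simp [hl]; omega⟩
    rw [extZ_apply_mem _ _ _ this]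
  rw [Finset.sum_congr rfl h1, Finset.sum_congr rfl h2, Finset.sum_const, Finset.sum_const,
    card_right_ext hne hr, card_left_ext hne hr, sub_self]

lemma q0_mem {k m : ℕ} (hk : 2 ≤ k) (hm : 2 ≤ m) :
    extZ k m (fun _ => ((DD k m : ℝ))⁻¹) ∈ Qset k m := by
  have hD : (0 : ℝ) < DD k m := by exact_mod_cast DD_pos (m := m) hk
  apply mem_Qset hm
  · intro v hv; exact extZ_apply_not_mem _ _ _ hv
  · intro v
    by_cases h : v ∈ WordsM k m
    · rw [extZ_apply_mem _ _ _ h]; positivity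
    · rw [extZ_apply_not_mem _ _ _ h]
  · rw [sum_extZ]
    show ∑ _w : {x // x ∈ WordsM k m}, ((DD k m : ℝ))⁻¹ = 1
    rw [Finset.sum_const, Finset.card_univ, Fintype.card_coe,
      show (WordsM k m).card = DD k m from card_wordsM k m (by omega), nsmul_eq_mul,
      mul_inv_cancel₀ hD.ne']
  · exact flow_q0 hk hm _


set_option maxHeartbeats 2000000 in
theorem stmt16 (k m : ℕ) (hk : 2 ≤ k) (hm : 2 ≤ m) :
    DD k m - DD k (m - 1) - 1 ≤ Module.finrank ℝ (affineSpan ℝ (Qset k m)).direction ∧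
    Module.finrank ℝ (affineSpan ℝ (Qset k m)).direction ≤ DD k m - 1 := by
  classical
  have hD : (0 : ℝ) < DD k m := by exact_mod_cast DD_pos (m := m) hk
  set q0 : List (Letter k) → ℝ := extZ k m (fun _ => ((DD k m : ℝ))⁻¹) with hq0def
  have hq0 : q0 ∈ Qset k m := q0_mem hk hm
  set Psi : ({x // x ∈ WordsM k m} → ℝ) →ₗ[ℝ] ({x // x ∈ WordsM k (m - 1)} → ℝ) × ℝ :=
    ((flowMap k m).comp (extZ k m)).prod (sumF k m) with hPsidef
  -- every element of ker Psi maps into the vector span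
  have hker : ∀ f ∈ LinearMap.ker Psi, extZ k m f ∈ vectorSpan ℝ (Qset k m) := by
    intro f hf
    rw [LinearMap.mem_ker] at hf
    have hflow : flowMap k m (extZ k m f) = 0 := congrArg Prod.fst hf
    have hsum0 : sumF k m f = 0 := congrArg Prod.snd hf
    set M : ℝ := 1 + ∑ w : {x // x ∈ WordsM k m}, |f w| with hM
    have hsumabs : (0:ℝ) ≤ ∑ w : {x // x ∈ WordsM k m}, |f w| :=
      Finset.sum_nonneg fun i _ => abs_nonneg _
    have hMpos : (0:ℝ) < M := by rw [hM]; linarith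
    set ε : ℝ := (DD k m : ℝ)⁻¹ / M with hε
    have hεpos : 0 < ε := by positivity
    have hq1 : q0 + ε • extZ k m f ∈ Qset k m := by
      apply mem_Qset hm
      · intro v hv
        simp only [Pi.add_apply, Pi.smul_apply, smul_eq_mul, hq0def,
          extZ_apply_not_mem _ _ _ hv]
        ring
      · intro v
        by_cases h : v ∈ WordsM k m
        · simp only [Pi.add_apply, Pi.smul_apply, smul_eq_mul, hq0def,
            extZ_apply_mem _ _ _ h]
          have h1 : |f ⟨v, h⟩| ≤ M := by
            rw [hM]
            have := Finset.single_le_sum (f := fun w => |f w|)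
              (fun i _ => abs_nonneg (f i)) (Finset.mem_univ ⟨v, h⟩)
            linarith
          have h2 : ε * |f ⟨v, h⟩| ≤ (DD k m : ℝ)⁻¹ := by
            calc ε * |f ⟨v, h⟩| ≤ ε * M := by
                  exact mul_le_mul_of_nonneg_left h1 hεpos.le
              _ = (DD k m : ℝ)⁻¹ := div_mul_cancel₀ _ hMpos.ne'
          have h3 : -|f ⟨v, h⟩| ≤ f ⟨v, h⟩ := neg_abs_le _
          nlinarith
        · simp only [Pi.add_apply, Pi.smul_apply, smul_eq_mul, hq0def,
            extZ_apply_not_mem _ _ _ h]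
          simp
      · have : ∀ v ∈ WordsM k m, (q0 + ε • extZ k m f) v = q0 v + ε * extZ k m f v :=
          fun v _ => rfl
        rw [Finset.sum_congr rfl this, Finset.sum_add_distrib, ← Finset.mul_sum,
          sum_extZ, sum_extZ, hsum0]
        show (∑ _w : {x // x ∈ WordsM k m}, ((DD k m : ℝ))⁻¹) + ε * 0 = 1
        rw [Finset.sum_const, Finset.card_univ, Fintype.card_coe,
          show (WordsM k m).card = DD k m from card_wordsM k m (by omega), nsmul_eq_mul,
          mul_inv_cancel₀ hD.ne', mul_zero, add_zero]
      · rw [map_add, map_smul, hflow, hq0def, flow_q0 hk hm]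
        simp
    have heq : extZ k m f = ε⁻¹ • ((q0 + ε • extZ k m f) - q0) := by
      rw [add_sub_cancel_left, smul_smul, inv_mul_cancel₀ hεpos.ne', one_smul]
    rw [heq]
    exact Submodule.smul_mem _ _ (vsub_mem_vectorSpan ℝ hq1 hq0)
  -- upper bound containment
  have hup : vectorSpan ℝ (Qset k m) ≤
      Submodule.map (extZ k m) (LinearMap.ker (sumF k m)) := by
    rw [vectorSpan_def]
    apply Submodule.span_le.mpr
    rintro q ⟨a, ha, b, hb, rfl⟩
    obtain ⟨ha0, -, hasum, -⟩ := ha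
    obtain ⟨hb0, -, hbsum, -⟩ := hb
    refine ⟨fun w => a w.1 - b w.1, ?_, ?_⟩
    · simp only [SetLike.mem_coe, LinearMap.mem_ker]
      show ∑ w : {x // x ∈ WordsM k m}, (a w.1 - b w.1) = 0
      rw [Finset.sum_sub_distrib, Finset.sum_coe_sort (WordsM k m) a,
        Finset.sum_coe_sort (WordsM k m) b, hasum, hbsum, sub_self]
    · funext v
      by_cases h : v ∈ WordsM k m
      · rw [extZ_apply_mem _ _ _ h]; rfl
      · rw [extZ_apply_not_mem _ _ _ h]
        have h' : ¬(Reduced v ∧ v.length = m) := fun hc => h (mem_wordsM.mpr hc)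
        show (0:ℝ) = a v -ᵥ b v
        rw [ha0 v h', hb0 v h']
        simp
  -- dimension computations
  have hfinE : Module.finrank ℝ ({x // x ∈ WordsM k m} → ℝ) = DD k m := by
    rw [Module.finrank_fintype_fun_eq_card, Fintype.card_coe, card_wordsM k m (by omega)]
    rfl
  have hfinmap : ∀ (p : Submodule ℝ ({x // x ∈ WordsM k m} → ℝ)),
      Module.finrank ℝ (Submodule.map (extZ k m) p) = Module.finrank ℝ p := by
    intro p
    exact (LinearEquiv.finrank_eq (Submodule.equivMapOfInjective (extZ k m)
      (extZ_injective k m) p)).symm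
  have hdirection : (affineSpan ℝ (Qset k m)).direction = vectorSpan ℝ (Qset k m) :=
    direction_affineSpan ℝ (Qset k m)
  -- sumF is nonzero
  have hsumFne : sumF k m ≠ 0 := by
    intro h
    have h1 : sumF k m (fun _ => (1:ℝ)) = 0 := by rw [h]; rfl
    have h2 : sumF k m (fun _ => (1:ℝ)) = (WordsM k m).card := by
      show (∑ _w : {x // x ∈ WordsM k m}, (1:ℝ)) = _
      rw [Finset.sum_const, Finset.card_univ, Fintype.card_coe, nsmul_eq_mul, mul_one]
    rw [h2] at h1
    have : (WordsM k m).card = 0 := by exact_mod_cast h1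
    rw [card_wordsM k m (by omega)] at this
    have := DD_pos (m := m) hk
    unfold DD at this
    omega
  have hkerlt : Module.finrank ℝ (LinearMap.ker (sumF k m)) < DD k m := by
    rw [← hfinE]
    exact Submodule.finrank_lt (
      (fun htop => hsumFne (LinearMap.ker_eq_top.mp htop)))
  have hTfin : FiniteDimensional ℝ
      (Submodule.map (extZ k m) (LinearMap.ker (sumF k m))) := inferInstance
  have hdirfin : FiniteDimensional ℝ (vectorSpan ℝ (Qset k m)) :=
    Submodule.finiteDimensional_of_le hup
  constructor
  · -- lower bound
    have hmaple : Submodule.map (extZ k m) (LinearMap.ker Psi) ≤ vectorSpan ℝ (Qset k m) := by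
      rintro q ⟨f, hf, rfl⟩
      exact hker f hf
    have h1 : Module.finrank ℝ (Submodule.map (extZ k m) (LinearMap.ker Psi)) ≤
        Module.finrank ℝ (vectorSpan ℝ (Qset k m)) := by
      have : Module.Finite ℝ (vectorSpan ℝ (Qset k m)) := hdirfin
      exact Submodule.finrank_mono hmaple
    rw [hfinmap] at h1
    have h2 := LinearMap.finrank_range_add_finrank_ker Psi
    rw [hfinE] at h2
    have h3 : Module.finrank ℝ (LinearMap.range Psi) ≤ DD k (m-1) + 1 := by
      have h4 := Submodule.finrank_le (LinearMap.range Psi)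
      rw [Module.finrank_prod, Module.finrank_fintype_fun_eq_card, Fintype.card_coe,
        card_wordsM k (m-1) (by omega), Module.finrank_self] at h4
      exact h4
    rw [hdirection]
    omega
  · -- upper bound
    have h1 : Module.finrank ℝ (vectorSpan ℝ (Qset k m)) ≤
        Module.finrank ℝ (Submodule.map (extZ k m) (LinearMap.ker (sumF k m))) :=
      Submodule.finrank_mono hup
    rw [hfinmap] at h1
    rw [hdirection]
    omega


end
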